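/- For all x > 0, ln((sinh x)/x) > (1/3) ln(cosh x); equivalently (sinh x)/x > (cosh x)^{1/3}. -/

import Mathlib

open Real Set Filter Topology

lemma aux_K (x : ℝ) (hx : 0 < x) : Real.sinh x < x * Real.cosh x := by
  have hmono : StrictMonoOn (fun y : ℝ => y * Real.cosh y - Real.sinh y) (Ici 0) := by
    apply strictMonoOn_of_deriv_pos (convex_Ici 0)
    · fun_prop
    · intro y hy
      rw [interior_Ici] at hy
      have hd : HasDerivAt (fun y : ℝ => y * Real.cosh y - Real.sinh y)
          (y * Real.sinh y) y := by
        have := ((hasDerivAt_id y).mul (Real.hasDerivAt_cosh y)).sub (Real.hasDerivAt_sinh y)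
        refine this.congr_deriv ?_
        simp only [id_eq]; ring
      rw [hd.deriv]
      exact mul_pos hy (Real.sinh_pos_iff.mpr hy)
  have := hmono (self_mem_Ici) (le_of_lt hx : (0:ℝ) ≤ x) hx
  simpa using this

lemma aux_H (x : ℝ) (hx : 0 < x) :
    0 < 3 * x * Real.cosh x ^ 2 - 3 * Real.sinh x * Real.cosh x - x * Real.sinh x ^ 2 := by
  have hmono : StrictMonoOn (fun y : ℝ =>
      3 * y * Real.cosh y ^ 2 - 3 * Real.sinh y * Real.cosh y - y * Real.sinh y ^ 2) (Ici 0) := by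
    apply strictMonoOn_of_deriv_pos (convex_Ici 0)
    · fun_prop
    · intro y hy
      rw [interior_Ici] at hy
      have hd : HasDerivAt (fun y : ℝ =>
          3 * y * Real.cosh y ^ 2 - 3 * Real.sinh y * Real.cosh y - y * Real.sinh y ^ 2)
          (4 * Real.sinh y * (y * Real.cosh y - Real.sinh y)) y := by
        have h1 := ((hasDerivAt_id y).const_mul (3:ℝ)).mul ((Real.hasDerivAt_cosh y).pow 2)
        have h2 := ((Real.hasDerivAt_sinh y).const_mul (3:ℝ)).mul (Real.hasDerivAt_cosh y)
        have h3 := (hasDerivAt_id y).mul ((Real.hasDerivAt_sinh y).pow 2)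
        have := (h1.sub h2).sub h3
        refine this.congr_deriv ?_
        simp only [id_eq, Pi.pow_apply]; ring
      rw [hd.deriv]
      have := aux_K y hy
      have hs := Real.sinh_pos_iff.mpr hy
      nlinarith
  have := hmono (self_mem_Ici) (le_of_lt hx : (0:ℝ) ≤ x) hx
  simpa using this

noncomputable def Gfun (x : ℝ) : ℝ :=
  3 * Real.log (Real.sinh x) - 3 * Real.log x - Real.log (Real.cosh x)

lemma G_mono : StrictMonoOn Gfun (Ioi 0) := by
  apply strictMonoOn_of_deriv_pos (convex_Ioi 0)
  · apply ContinuousOn.sub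
    apply ContinuousOn.sub
    · exact ((Real.continuousOn_log.comp Real.continuous_sinh.continuousOn
        (fun y hy => (Real.sinh_pos_iff.mpr hy).ne')).const_smul 3).congr
        (fun y hy => by simp [smul_eq_mul])
    · exact ((Real.continuousOn_log.mono (by intro y hy; simpa using (ne_of_gt hy))).const_smul 3).congr
        (fun y hy => by simp [smul_eq_mul])
    · exact Real.continuousOn_log.comp Real.continuous_cosh.continuousOn
        (fun y _ => (Real.cosh_pos y).ne')
  · intro y hy
    rw [interior_Ioi] at hy
    have hs := Real.sinh_pos_iff.mpr hy
    have hc := Real.cosh_pos y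
    have hd : HasDerivAt Gfun
        (3 * (Real.cosh y / Real.sinh y) - 3 * (1 / y) - Real.sinh y / Real.cosh y) y := by
      have h1 : HasDerivAt (fun z => Real.log (Real.sinh z)) (Real.cosh y / Real.sinh y) y := by
        have := (Real.hasDerivAt_log hs.ne').comp y (Real.hasDerivAt_sinh y)
        simpa [div_eq_mul_inv, mul_comm, Function.comp_def] using this
      have h2 : HasDerivAt Real.log (1 / y) y := by
        simpa [one_div] using Real.hasDerivAt_log hy.ne'
      have h3 : HasDerivAt (fun z => Real.log (Real.cosh z)) (Real.sinh y / Real.cosh y) y := by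
        have := (Real.hasDerivAt_log hc.ne').comp y (Real.hasDerivAt_cosh y)
        simpa [div_eq_mul_inv, mul_comm, Function.comp_def] using this
      exact ((h1.const_mul 3).sub (h2.const_mul 3)).sub h3
    rw [hd.deriv]
    have hy' : (0:ℝ) < y := hy
    have heq : 3 * (Real.cosh y / Real.sinh y) - 3 * (1 / y) - Real.sinh y / Real.cosh y
        = (3 * y * Real.cosh y ^ 2 - 3 * Real.sinh y * Real.cosh y - y * Real.sinh y ^ 2)
          / (y * Real.sinh y * Real.cosh y) := by
      field_simp [hy'.ne', hs.ne', hc.ne']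
    rw [heq]
    exact div_pos (aux_H y hy) (by positivity)


lemma G_tendsto : Tendsto Gfun (𝓝[>] (0:ℝ)) (𝓝 0) := by
  have hslope : Tendsto (fun y : ℝ => Real.sinh y / y) (𝓝[≠] (0:ℝ)) (𝓝 1) := by
    have := hasDerivAt_iff_tendsto_slope.mp (Real.hasDerivAt_sinh 0)
    simp only [Real.cosh_zero] at this
    refine this.congr' ?_
    filter_upwards [self_mem_nhdsWithin] with y hy
    simp [slope_def_field, div_eq_mul_inv]
  have hslope' : Tendsto (fun y : ℝ => Real.sinh y / y) (𝓝[>] (0:ℝ)) (𝓝 1) :=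
    hslope.mono_left (nhdsWithin_mono _ (fun y hy => ne_of_gt hy))
  have h1 : Tendsto (fun y : ℝ => Real.log (Real.sinh y / y)) (𝓝[>] (0:ℝ)) (𝓝 0) := by
    have := (Real.continuousAt_log (one_ne_zero)).tendsto.comp hslope'
    simpa [Function.comp_def] using this
  have h2 : Tendsto (fun y : ℝ => Real.log (Real.cosh y)) (𝓝[>] (0:ℝ)) (𝓝 0) := by
    have : ContinuousAt (fun y : ℝ => Real.log (Real.cosh y)) 0 := by
      exact (Real.continuousAt_log (by positivity)).comp Real.continuous_cosh.continuousAt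
    have h2' : Tendsto (fun y : ℝ => Real.log (Real.cosh y)) (𝓝[>] (0:ℝ))
        (𝓝 (Real.log (Real.cosh 0))) := this.tendsto.mono_left nhdsWithin_le_nhds
    simpa using h2'
  have := (h1.const_mul 3).sub h2
  rw [mul_zero, sub_zero] at this
  refine this.congr' ?_
  filter_upwards [self_mem_nhdsWithin] with y hy
  have hy : (0:ℝ) < y := hy
  rw [Real.log_div (Real.sinh_pos_iff.mpr hy).ne' hy.ne']
  simp only [Gfun]; ring

theorem stmt_11 (x : ℝ) (hx : 0 < x) :
    Real.log (Real.sinh x / x) > (1 / 3) * Real.log (Real.cosh x) := by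
  have hx2 : (0:ℝ) < x / 2 := by linarith
  have hmem : x / 2 ∈ Ioi (0:ℝ) := hx2
  have hlt : Gfun (x / 2) < Gfun x := G_mono hmem (by exact hx) (by linarith)
  have hge : 0 ≤ Gfun (x / 2) := by
    refine le_of_tendsto G_tendsto ?_
    filter_upwards [Ioo_mem_nhdsGT_of_mem ⟨le_refl (0:ℝ), hx2⟩] with y hy
    exact le_of_lt (G_mono hy.1 hmem hy.2)
  have hGx : 0 < Gfun x := lt_of_le_of_lt hge hlt
  have hlog : Real.log (Real.sinh x / x) = Real.log (Real.sinh x) - Real.log x :=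
    Real.log_div (Real.sinh_pos_iff.mpr hx).ne' hx.ne'
  simp only [Gfun] at hGx
  rw [hlog]
  linarith
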